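/- Let P be a finite set of points in ℝ², let P̂ ⊆ P be nonempty, let r ≥ 0, and let f : P → P̂ be a map with f(p) = p for every p ∈ P̂ and dist(p, f(p)) ≤ r for every p ∈ P. Let (P̂1, P̂2) be a partition of P̂ into two nonempty disjoint subsets with P̂1 ∪ P̂2 = P̂, and define P_i := {p ∈ P : f(p) ∈ P̂_i} for i = 1, 2. Then per(P1) + per(P2) ≤ per(P̂1) + per(P̂2) + 4πr. -/

import Mathlib

open Real Set

noncomputable def per (S : Set (EuclideanSpace ℝ (Fin 2))) : ℝ :=
  ∫ θ in (0:ℝ)..π,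
    (sSup ((fun p => p 0 * Real.cos θ + p 1 * Real.sin θ) '' S) -
     sInf ((fun p => p 0 * Real.cos θ + p 1 * Real.sin θ) '' S))

def IsPartition (P P1 P2 : Set (EuclideanSpace ℝ (Fin 2))) : Prop :=
  P1.Nonempty ∧ P2.Nonempty ∧ Disjoint P1 P2 ∧ P1 ∪ P2 = P

def Separates (u : EuclideanSpace ℝ (Fin 2)) (c : ℝ)
    (P1 P2 : Set (EuclideanSpace ℝ (Fin 2))) : Prop :=
  (∀ p ∈ P1, (inner ℝ p u : ℝ) ≤ c) ∧ (∀ q ∈ P2, c ≤ (inner ℝ q u : ℝ))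

/-- The separation distance between the convex hulls of `A` and `B`. -/
noncomputable def sepDist (A B : Set (EuclideanSpace ℝ (Fin 2))) : ℝ :=
  sInf (Set.image2 dist (convexHull ℝ A) (convexHull ℝ B))

namespace PerAux

noncomputable def g (θ : ℝ) (p : EuclideanSpace ℝ (Fin 2)) : ℝ :=
  p 0 * Real.cos θ + p 1 * Real.sin θ

lemma lip (θ : ℝ) (p q : EuclideanSpace ℝ (Fin 2)) : g θ p ≤ g θ q + dist p q := by
  have hd : dist p q = Real.sqrt ((p 0 - q 0)^2 + (p 1 - q 1)^2) := by
    rw [EuclideanSpace.dist_eq]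
    congr 1
    simp [Fin.sum_univ_two, Real.dist_eq, sq_abs]
  have h2 : (g θ p - g θ q)^2 ≤ (p 0 - q 0)^2 + (p 1 - q 1)^2 := by
    have := Real.sin_sq_add_cos_sq θ
    unfold g
    nlinarith [sq_nonneg ((p 0 - q 0) * Real.sin θ - (p 1 - q 1) * Real.cos θ)]
  have h3 : g θ p - g θ q ≤ dist p q := by
    calc g θ p - g θ q ≤ |g θ p - g θ q| := le_abs_self _
    _ = Real.sqrt ((g θ p - g θ q)^2) := (Real.sqrt_sq_eq_abs _).symm
    _ ≤ Real.sqrt ((p 0 - q 0)^2 + (p 1 - q 1)^2) := Real.sqrt_le_sqrt h2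
    _ = dist p q := hd.symm
  linarith

lemma cont_sSup {S : Set (EuclideanSpace ℝ (Fin 2))} (hS : S.Finite) (hne : S.Nonempty) :
    Continuous (fun θ => sSup (g θ '' S)) := by
  have hne' : hS.toFinset.Nonempty := by simpa using hne
  have heq : ∀ θ, sSup (g θ '' S) = hS.toFinset.sup' hne' (g θ) := by
    intro θ
    rw [Finset.sup'_eq_csSup_image, hS.coe_toFinset]
  simp only [heq]
  exact Continuous.finset_sup'_apply hne' fun p _ =>
    ((continuous_const.mul Real.continuous_cos).add (continuous_const.mul Real.continuous_sin))

lemma cont_sInf {S : Set (EuclideanSpace ℝ (Fin 2))} (hS : S.Finite) (hne : S.Nonempty) :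
    Continuous (fun θ => sInf (g θ '' S)) := by
  have hne' : hS.toFinset.Nonempty := by simpa using hne
  have heq : ∀ θ, sInf (g θ '' S) = hS.toFinset.inf' hne' (g θ) := by
    intro θ
    rw [Finset.inf'_eq_csInf_image, hS.coe_toFinset]
  simp only [heq]
  exact Continuous.finset_inf'_apply hne' fun p _ =>
    ((continuous_const.mul Real.continuous_cos).add (continuous_const.mul Real.continuous_sin))

lemma per_le {S T : Set (EuclideanSpace ℝ (Fin 2))} (hS : S.Finite)
    (hT : T.Finite) (hTne : T.Nonempty) (hTS : T ⊆ S) (r : ℝ)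
    (f : EuclideanSpace ℝ (Fin 2) → EuclideanSpace ℝ (Fin 2))
    (hm : ∀ p ∈ S, f p ∈ T) (hd : ∀ p ∈ S, dist p (f p) ≤ r) :
    per S ≤ per T + 2 * π * r := by
  have hSne : S.Nonempty := hTne.mono hTS
  have key : ∀ θ : ℝ,
      sSup (g θ '' S) - sInf (g θ '' S) ≤ (sSup (g θ '' T) - sInf (g θ '' T)) + 2 * r := by
    intro θ
    have hbT : BddAbove (g θ '' T) := (hT.image _).bddAbove
    have hbT' : BddBelow (g θ '' T) := (hT.image _).bddBelow
    have hsup : sSup (g θ '' S) ≤ sSup (g θ '' T) + r := by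
      apply csSup_le (hSne.image _)
      rintro x ⟨p, hp, rfl⟩
      have h1 : g θ p ≤ g θ (f p) + r := le_trans (lip θ p (f p)) (by linarith [hd p hp])
      have h2 : g θ (f p) ≤ sSup (g θ '' T) := le_csSup hbT ⟨f p, hm p hp, rfl⟩
      linarith
    have hinf : sInf (g θ '' T) - r ≤ sInf (g θ '' S) := by
      apply le_csInf (hSne.image _)
      rintro x ⟨p, hp, rfl⟩
      have h1 : g θ (f p) ≤ g θ p + r := by
        have := lip θ (f p) p
        rw [dist_comm] at this
        linarith [hd p hp]
      have h2 : sInf (g θ '' T) ≤ g θ (f p) := csInf_le hbT' ⟨f p, hm p hp, rfl⟩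
      linarith
    linarith
  have hcS : Continuous (fun θ => sSup (g θ '' S) - sInf (g θ '' S)) :=
    (cont_sSup hS hSne).sub (cont_sInf hS hSne)
  have hcT : Continuous (fun θ => (sSup (g θ '' T) - sInf (g θ '' T)) + 2 * r) :=
    (((cont_sSup hT hTne).sub (cont_sInf hT hTne)).add continuous_const)
  have hmono : per S ≤ ∫ θ in (0:ℝ)..π, ((sSup (g θ '' T) - sInf (g θ '' T)) + 2 * r) := by
    unfold per
    apply intervalIntegral.integral_mono_on Real.pi_pos.le
    · exact (hcS.intervalIntegrable _ _)
    · exact (hcT.intervalIntegrable _ _)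
    · intro θ _; exact key θ
  have hsplit : (∫ θ in (0:ℝ)..π, ((sSup (g θ '' T) - sInf (g θ '' T)) + 2 * r))
      = per T + 2 * π * r := by
    rw [intervalIntegral.integral_add (f := fun θ => sSup (g θ '' T) - sInf (g θ '' T))
      (((cont_sSup hT hTne).sub (cont_sInf hT hTne)).intervalIntegrable _ _)
      (intervalIntegrable_const)]
    have hpt : (∫ θ in (0:ℝ)..π, (sSup (g θ '' T) - sInf (g θ '' T))) = per T := by
      unfold per g; rfl
    rw [hpt, intervalIntegral.integral_const]
    simp
    ring
  calc per S ≤ _ := hmono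
  _ = per T + 2 * π * r := hsplit

end PerAux

theorem per_partition_of_rounding
    (P Phat P1hat P2hat : Set (EuclideanSpace ℝ (Fin 2)))
    (hfin : P.Finite) (hsub : Phat ⊆ P) (hne : Phat.Nonempty)
    (r : ℝ) (hr : 0 ≤ r)
    (f : EuclideanSpace ℝ (Fin 2) → EuclideanSpace ℝ (Fin 2))
    (hmap : ∀ p ∈ P, f p ∈ Phat)
    (hfix : ∀ p ∈ Phat, f p = p)
    (hdist : ∀ p ∈ P, dist p (f p) ≤ r)
    (hpart : IsPartition Phat P1hat P2hat) :
    per {p ∈ P | f p ∈ P1hat} + per {p ∈ P | f p ∈ P2hat} ≤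
      per P1hat + per P2hat + 4 * π * r := by
  obtain ⟨h1ne, h2ne, hdisj, huni⟩ := hpart
  have h1sub : P1hat ⊆ Phat := huni ▸ subset_union_left
  have h2sub : P2hat ⊆ Phat := huni ▸ subset_union_right
  have key : ∀ Pi : Set (EuclideanSpace ℝ (Fin 2)), Pi ⊆ Phat → Pi.Nonempty →
      per {p ∈ P | f p ∈ Pi} ≤ per Pi + 2 * π * r := by
    intro Pi hisub hine
    apply PerAux.per_le (hfin.subset (sep_subset _ _)) (hfin.subset (hisub.trans hsub))
      hine
    · intro q hq
      exact ⟨hsub (hisub hq), by rw [hfix q (hisub hq)]; exact hq⟩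
    · rintro p ⟨hp, hfp⟩; exact hfp
    · rintro p ⟨hp, _⟩; exact hdist p hp
  have k1 := key P1hat h1sub h1ne
  have k2 := key P2hat h2sub h2ne
  linarith
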